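/- arXiv:1906.01368 — 2 statements merged into one kernel-verified Lean document; each statement's English description precedes it below -/
import Mathlib

section
/- Let s : ℝ≥0 → ℝ be a C¹ function satisfying s(0) = s⁰ with s_m < s⁰ ≤ S, and suppose for all t ≥ 0: γ s(t) log(s_m / s(t)) ≤ s'(t) ≤ γ s(t) log(S / s(t)), where γ > 0 and s_m < S. If s(t) > 0 for all t, then s_m · exp(−e^{−γ t} log(s_m/s⁰)) ≤ s(t) ≤ S · exp(−e^{−γ t} log(S/s⁰)) for all t ≥ 0; in particular s_m < s(t) ≤ S for all t ≥ 0. -/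
open Real

lemma gompertz_aux (γ c : ℝ) (s s' : ℝ → ℝ)
    (hderiv : ∀ t, 0 ≤ t → HasDerivAt s (s' t) t)
    (hpos : ∀ t, 0 ≤ t → 0 < s t)
    (hb : ∀ t, 0 ≤ t → γ * s t * (c - Real.log (s t)) ≤ s' t) :
    ∀ t, 0 ≤ t → c + Real.exp (-(γ * t)) * (Real.log (s 0) - c) ≤ Real.log (s t) := by
  set u : ℝ → ℝ := fun t => Real.exp (γ * t) * (Real.log (s t) - c) with hu
  have hud : ∀ t, 0 ≤ t → HasDerivAt u
      (Real.exp (γ * t) * γ * (Real.log (s t) - c) + Real.exp (γ * t) * (s' t / s t)) t := by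
    intro t ht
    have h1 : HasDerivAt (fun t => Real.exp (γ * t)) (Real.exp (γ * t) * γ) t := by
      simpa using (HasDerivAt.exp ((hasDerivAt_id t).const_mul γ))
    have h2 : HasDerivAt (fun t => Real.log (s t) - c) (s' t / s t) t :=
      ((hderiv t ht).log (hpos t ht).ne').sub_const c
    exact h1.mul h2
  have hmono : MonotoneOn u (Set.Ici 0) := by
    apply monotoneOn_of_deriv_nonneg (convex_Ici 0)
    · intro t ht
      exact (hud t ht).continuousAt.continuousWithinAt
    · intro t ht
      rw [interior_Ici] at ht
      exact (hud t ht.le).differentiableAt.differentiableWithinAt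
    · intro t ht
      rw [interior_Ici] at ht
      rw [(hud t ht.le).deriv]
      have hst := hpos t ht.le
      have h3 : γ * (c - Real.log (s t)) ≤ s' t / s t := by
        rw [le_div_iff₀ hst]
        calc γ * (c - Real.log (s t)) * s t = γ * s t * (c - Real.log (s t)) := by ring
          _ ≤ s' t := hb t ht.le
      have h4 : 0 ≤ γ * (Real.log (s t) - c) + s' t / s t := by linarith
      have h5 : (0:ℝ) ≤ Real.exp (γ * t) := (Real.exp_pos _).le
      calc (0:ℝ) = Real.exp (γ * t) * 0 := by ring
        _ ≤ Real.exp (γ * t) * (γ * (Real.log (s t) - c) + s' t / s t) :=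
            mul_le_mul_of_nonneg_left h4 h5
        _ = Real.exp (γ * t) * γ * (Real.log (s t) - c)
              + Real.exp (γ * t) * (s' t / s t) := by ring
  intro t ht
  have key : Real.log (s 0) - c ≤ Real.exp (γ * t) * (Real.log (s t) - c) := by
    have h := hmono Set.self_mem_Ici (Set.mem_Ici.2 ht) ht
    simpa [hu] using h
  have hE : Real.exp (-(γ * t)) * Real.exp (γ * t) = 1 := by
    rw [← Real.exp_add]; simp
  have h7 := mul_le_mul_of_nonneg_left key (Real.exp_pos (-(γ * t))).le
  rw [← mul_assoc, hE, one_mul] at h7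
  linarith

lemma gompertz_aux_upper (γ c : ℝ) (s s' : ℝ → ℝ)
    (hderiv : ∀ t, 0 ≤ t → HasDerivAt s (s' t) t)
    (hpos : ∀ t, 0 ≤ t → 0 < s t)
    (hb : ∀ t, 0 ≤ t → s' t ≤ γ * s t * (c - Real.log (s t))) :
    ∀ t, 0 ≤ t → Real.log (s t) ≤ c + Real.exp (-(γ * t)) * (Real.log (s 0) - c) := by
  have h := gompertz_aux γ (-c) (fun t => (s t)⁻¹) (fun t => -s' t / (s t) ^ 2)
    (fun t ht => (hderiv t ht).inv (hpos t ht).ne')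
    (fun t ht => inv_pos.2 (hpos t ht))
    (fun t ht => by
      have hst := hpos t ht
      simp only [Real.log_inv]
      rw [le_div_iff₀ (by positivity : (0:ℝ) < s t ^ 2)]
      have h1 : γ * (s t)⁻¹ * (-c - -Real.log (s t)) * s t ^ 2
          = γ * s t * (Real.log (s t) - c) := by
        field_simp; ring
      rw [h1]
      have := hb t ht
      linarith)
  intro t ht
  have h2 := h t ht
  simp only [Real.log_inv] at h2
  linarith

/-- Comparison principle: a positive `C¹` function whose derivative is squeezed between
two Gompertz-type rates stays between the corresponding Gompertz trajectories; in
particular `s_m < s(t) ≤ S` for all `t ≥ 0`. -/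
theorem gompertz_comparison
    (sm S γ s0 : ℝ) (hsm : 0 < sm) (hsmS : sm < S) (hγ : 0 < γ)
    (hs0 : sm < s0) (hs0' : s0 ≤ S)
    (s s' : ℝ → ℝ)
    (hderiv : ∀ t, 0 ≤ t → HasDerivAt s (s' t) t)
    (hcont : ContinuousOn s' (Set.Ici (0 : ℝ)))
    (hpos : ∀ t, 0 ≤ t → 0 < s t)
    (h0 : s 0 = s0)
    (hlow : ∀ t, 0 ≤ t → γ * s t * Real.log (sm / s t) ≤ s' t)
    (hhigh : ∀ t, 0 ≤ t → s' t ≤ γ * s t * Real.log (S / s t)) :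
    ∀ t, 0 ≤ t →
      (sm * Real.exp (-(Real.exp (-(γ * t))) * Real.log (sm / s0)) ≤ s t ∧
       s t ≤ S * Real.exp (-(Real.exp (-(γ * t))) * Real.log (S / s0)) ∧
       sm < s t ∧ s t ≤ S) := by
  have hS : (0:ℝ) < S := hsm.trans hsmS
  have hs0pos : (0:ℝ) < s0 := hsm.trans hs0
  have hlow' : ∀ t, 0 ≤ t → γ * s t * (Real.log sm - Real.log (s t)) ≤ s' t := by
    intro t ht
    have := hlow t ht
    rwa [Real.log_div hsm.ne' (hpos t ht).ne'] at this
  have hhigh' : ∀ t, 0 ≤ t → s' t ≤ γ * s t * (Real.log S - Real.log (s t)) := by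
    intro t ht
    have := hhigh t ht
    rwa [Real.log_div hS.ne' (hpos t ht).ne'] at this
  have hL := gompertz_aux γ (Real.log sm) s s' hderiv hpos hlow'
  have hU := gompertz_aux_upper γ (Real.log S) s s' hderiv hpos hhigh'
  intro t ht
  have hLt := hL t ht
  have hUt := hU t ht
  rw [h0] at hLt hUt
  have hexp : 0 < Real.exp (-(γ * t)) := Real.exp_pos _
  have hexp1 : Real.exp (-(γ * t)) ≤ 1 := by
    rw [Real.exp_le_one_iff]
    nlinarith
  have hst := hpos t ht
  have hlog_sm : Real.log (sm / s0) = Real.log sm - Real.log s0 :=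
    Real.log_div hsm.ne' hs0pos.ne'
  have hlog_S : Real.log (S / s0) = Real.log S - Real.log s0 :=
    Real.log_div hS.ne' hs0pos.ne'
  have hlower : sm * Real.exp (-(Real.exp (-(γ * t))) * Real.log (sm / s0)) ≤ s t := by
    have : sm * Real.exp (-(Real.exp (-(γ * t))) * Real.log (sm / s0))
        = Real.exp (Real.log sm + Real.exp (-(γ * t)) * (Real.log s0 - Real.log sm)) := by
      rw [Real.exp_add, Real.exp_log hsm, hlog_sm]
      ring_nf
    rw [this, ← Real.exp_log hst, Real.exp_le_exp]
    linarith
  have hupper : s t ≤ S * Real.exp (-(Real.exp (-(γ * t))) * Real.log (S / s0)) := by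
    have : S * Real.exp (-(Real.exp (-(γ * t))) * Real.log (S / s0))
        = Real.exp (Real.log S + Real.exp (-(γ * t)) * (Real.log s0 - Real.log S)) := by
      rw [Real.exp_add, Real.exp_log hS, hlog_S]
      ring_nf
    rw [this, ← Real.exp_log hst, Real.exp_le_exp]
    linarith
  refine ⟨hlower, hupper, ?_, ?_⟩
  · have hx : 0 < -(Real.exp (-(γ * t))) * Real.log (sm / s0) := by
      have : Real.log (sm / s0) < 0 := by
        rw [hlog_sm]
        have := Real.log_lt_log hsm hs0
        linarith
      nlinarith
    have h1 : (1:ℝ) < Real.exp (-(Real.exp (-(γ * t))) * Real.log (sm / s0)) := by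
      have := Real.exp_lt_exp.mpr hx
      simpa using this
    have : sm < sm * Real.exp (-(Real.exp (-(γ * t))) * Real.log (sm / s0)) := by
      nlinarith
    exact this.trans_le hlower
  · have hx : -(Real.exp (-(γ * t))) * Real.log (S / s0) ≤ 0 := by
      have : 0 ≤ Real.log (S / s0) := by
        rw [hlog_S]
        have := Real.log_le_log hs0pos hs0'
        linarith
      nlinarith
    have hle1 : Real.exp (-(Real.exp (-(γ * t))) * Real.log (S / s0)) ≤ 1 :=
      Real.exp_le_one_iff.mpr hx
    calc s t ≤ S * Real.exp (-(Real.exp (-(γ * t))) * Real.log (S / s0)) := hupper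
      _ ≤ S * 1 := mul_le_mul_of_nonneg_left hle1 hS.le
      _ = S := mul_one S
end

section
/- Let g : Z² → X satisfy |g(z, z')| ≤ K₁(1 + |X-component of z| + |X-component of z'|), let μ₀ be a probability measure on Z with finite first moment M¹ = ∫|z| dμ₀(z), and let f ∈ 𝒴 with ‖f‖_𝒴 ≤ R. Then the map Φ_α(f)(t, X, θ) = X + ∫₀ᵗ ∫_Z g(f(s, X, θ), θ, f(s, X', θ'), θ') dμ₀(X', θ') ds satisfies, for |t| ≤ α: ‖Φ_α(f)(t, ·)‖_𝒴 ≤ 1 + K₁ α (1 + (2 + M¹) R). -/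
open Real MeasureTheory

/-- A priori bound for the Picard map `Φ_α`: if `‖f(t,·)‖_𝒴 ≤ R` for `|t| ≤ α`, `g`
satisfies (A1) with constant `K₁`, and `μ₀` is a probability measure with first moment
`M¹`, then `‖Φ_α(f)(t,·)‖_𝒴 ≤ 1 + K₁ α (1 + (2 + M¹) R)` for `|t| ≤ α`. -/
theorem picard_map_bound
    (dX dΘ : ℕ)
    (g : EuclideanSpace ℝ (Fin dX) → EuclideanSpace ℝ (Fin dΘ) →
         EuclideanSpace ℝ (Fin dX) → EuclideanSpace ℝ (Fin dΘ) →
         EuclideanSpace ℝ (Fin dX))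
    (hgmeas : Measurable (fun p : (EuclideanSpace ℝ (Fin dX) × EuclideanSpace ℝ (Fin dΘ)) ×
        (EuclideanSpace ℝ (Fin dX) × EuclideanSpace ℝ (Fin dΘ)) =>
        g p.1.1 p.1.2 p.2.1 p.2.2))
    (K₁ : ℝ) (hK₁ : 0 < K₁)
    (hA1 : ∀ X₁ θ₁ X₂ θ₂, ‖g X₁ θ₁ X₂ θ₂‖ ≤ K₁ * (1 + ‖X₁‖ + ‖X₂‖))
    (μ₀ : Measure (EuclideanSpace ℝ (Fin dX) × EuclideanSpace ℝ (Fin dΘ)))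
    [IsProbabilityMeasure μ₀]
    (hM : Integrable (fun z => ‖z‖) μ₀)
    (M₁ : ℝ) (hM₁ : M₁ = ∫ z, ‖z‖ ∂μ₀)
    (α R : ℝ) (hα : 0 < α) (hR : 1 < R)
    (f : ℝ → (EuclideanSpace ℝ (Fin dX) × EuclideanSpace ℝ (Fin dΘ)) →
         EuclideanSpace ℝ (Fin dX))
    (hfcont : Continuous (fun p : ℝ × (EuclideanSpace ℝ (Fin dX) × EuclideanSpace ℝ (Fin dΘ))
        => f p.1 p.2))
    (hfR : ∀ t, |t| ≤ α → ∀ z, ‖f t z‖ ≤ R * (1 + ‖z‖)) :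
    ∀ t, |t| ≤ α → ∀ z : EuclideanSpace ℝ (Fin dX) × EuclideanSpace ℝ (Fin dΘ),
      ‖z.1 + ∫ s in (0:ℝ)..t, (∫ z', g (f s z) z.2 (f s z') z'.2 ∂μ₀)‖
        ≤ (1 + K₁ * α * (1 + (2 + M₁) * R)) * (1 + ‖z‖) := by

  intro t ht z
  have hM0 : 0 ≤ M₁ := by
    rw [hM₁]; exact integral_nonneg fun _ => norm_nonneg _
  have hR0 : 0 < R := lt_trans one_pos hR
  have hz0 : (0:ℝ) ≤ ‖z‖ := norm_nonneg z
  set C : ℝ := K₁ * (1 + (2 + M₁) * R) * (1 + ‖z‖) with hC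
  have key : ∀ s : ℝ, |s| ≤ α →
      ‖∫ z', g (f s z) z.2 (f s z') z'.2 ∂μ₀‖ ≤ C := by
    intro s hs
    have hone : Integrable (fun z' : EuclideanSpace ℝ (Fin dX) × EuclideanSpace ℝ (Fin dΘ) =>
        1 + ‖z'‖) μ₀ := (integrable_const (1:ℝ)).add hM
    have hI : ∫ z', (1 + ‖z'‖) ∂μ₀ = 1 + M₁ := by
      rw [integral_add (integrable_const (1:ℝ)) hM, integral_const]
      simp [hM₁]
    have h2nd : Integrable (fun z' : EuclideanSpace ℝ (Fin dX) × EuclideanSpace ℝ (Fin dΘ) =>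
        K₁ * (R * (1 + ‖z'‖))) μ₀ := (hone.const_mul R).const_mul K₁
    have hdom : Integrable (fun z' : EuclideanSpace ℝ (Fin dX) × EuclideanSpace ℝ (Fin dΘ) =>
        K₁ * (1 + ‖f s z‖) + K₁ * (R * (1 + ‖z'‖))) μ₀ :=
      (integrable_const _).add h2nd
    have hbound : ∀ z' : EuclideanSpace ℝ (Fin dX) × EuclideanSpace ℝ (Fin dΘ),
        ‖g (f s z) z.2 (f s z') z'.2‖ ≤ K₁ * (1 + ‖f s z‖) + K₁ * (R * (1 + ‖z'‖)) := by
      intro z'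
      have h1 := hA1 (f s z) z.2 (f s z') z'.2
      have h2 := hfR s hs z'
      nlinarith [norm_nonneg (f s z')]
    calc ‖∫ z', g (f s z) z.2 (f s z') z'.2 ∂μ₀‖
        ≤ ∫ z', (K₁ * (1 + ‖f s z‖) + K₁ * (R * (1 + ‖z'‖))) ∂μ₀ :=
          norm_integral_le_of_norm_le hdom (Filter.Eventually.of_forall hbound)
      _ = K₁ * (1 + ‖f s z‖) + K₁ * (R * (1 + M₁)) := by
          rw [integral_add (integrable_const _) h2nd,
            integral_const, integral_const_mul, integral_const_mul, hI]
          simp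
      _ ≤ C := by
          have h2 := hfR s hs z
          have h3 := norm_nonneg (f s z)
          rw [hC]
          nlinarith [mul_nonneg hK₁.le hz0,
            mul_nonneg (mul_nonneg hK₁.le hR0.le) hz0,
            mul_nonneg (mul_nonneg (mul_nonneg hK₁.le hM0) hR0.le) hz0,
            mul_le_mul_of_nonneg_left h2 hK₁.le]
  have hCnn : 0 ≤ C := le_trans (norm_nonneg _) (key 0 (by simpa using le_of_lt hα))
  have houter : ‖∫ s in (0:ℝ)..t, (∫ z', g (f s z) z.2 (f s z') z'.2 ∂μ₀)‖ ≤ C * |t - 0| := by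
    apply intervalIntegral.norm_integral_le_of_norm_le_const
    intro s hs
    apply key
    rcases hs with ⟨h1, h2⟩
    have hmin : -|t| ≤ min 0 t := le_min (neg_nonpos.mpr (abs_nonneg t)) (neg_abs_le t)
    have hmax : max 0 t ≤ |t| := max_le (abs_nonneg t) (le_abs_self t)
    exact le_trans (abs_le.mpr ⟨le_trans hmin (le_of_lt h1), le_trans h2 hmax⟩) ht
  calc ‖z.1 + ∫ s in (0:ℝ)..t, (∫ z', g (f s z) z.2 (f s z') z'.2 ∂μ₀)‖
      ≤ ‖z.1‖ + ‖∫ s in (0:ℝ)..t, (∫ z', g (f s z) z.2 (f s z') z'.2 ∂μ₀)‖ := norm_add_le _ _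
    _ ≤ ‖z‖ + C * |t - 0| := add_le_add (norm_fst_le z) houter
    _ ≤ (1 + K₁ * α * (1 + (2 + M₁) * R)) * (1 + ‖z‖) := by
        have htα : |t - 0| ≤ α := by simpa using ht
        have hCa : C * |t - 0| ≤ C * α := mul_le_mul_of_nonneg_left htα hCnn
        have hexp : (1 + K₁ * α * (1 + (2 + M₁) * R)) * (1 + ‖z‖) = 1 + ‖z‖ + α * C := by
          rw [hC]; ring
        rw [hexp]; linarith
end
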